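/- arXiv:0910.5580 — 2 statements merged into one kernel-verified Lean document; each statement's English description precedes it below -/
import Mathlib

section
/- Let W be a standard one-dimensional Brownian motion and 0 < T₁ < T. If tW(T₁)T₁ + t∫_{T₁}^t W(s)ds − t²W(T₁) = 0 almost surely for all t ∈ [T₁,T], then W(t) = W(T₁) almost surely for all t ∈ [T₁,T], which is a contradiction (this event has probability 0). Hence no such identity can hold. -/
open MeasureTheory Set ProbabilityTheory
open scoped ENNReal NNReal

/-- Let `W` be a standard one-dimensional Brownian motion (continuous paths,
`W 0 = 0`, Gaussian increments) and `0 < T₁ < T`. The identity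
`t·W(T₁)·T₁ + t·∫_{T₁}^t W(s) ds − t²·W(T₁) = 0` a.s. for all `t ∈ [T₁,T]` forces
`W(t) = W(T₁)` on `[T₁,T]`, an event of probability zero; hence no such identity can hold. -/
theorem stmt5 {Ω : Type*} [MeasurableSpace Ω] (μ : Measure Ω) [IsProbabilityMeasure μ]
    (T₁ T : ℝ) (hT₁ : 0 < T₁) (hT : T₁ < T)
    (W : ℝ → Ω → ℝ)
    (hWmeas : ∀ t, Measurable (W t))
    (hWcont : ∀ ω, Continuous (fun t => W t ω))
    (hW0 : ∀ ω, W 0 ω = 0)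
    (hWgauss : ∀ s t : ℝ, s ≤ t →
      Measure.map (fun ω => W t ω - W s ω) μ = gaussianReal 0 (Real.toNNReal (t - s)))
    (hId : ∀ t ∈ Icc T₁ T, ∀ᵐ ω ∂μ,
      t * W T₁ ω * T₁ + t * (∫ s in T₁..t, W s ω) - t ^ 2 * W T₁ ω = 0) :
    False := by
  set t₀ : ℝ := (T₁ + T) / 2 with ht₀def
  have ht₀ : t₀ ∈ Ioo T₁ T := ⟨by simp only [ht₀def]; linarith, by simp only [ht₀def]; linarith⟩
  -- a.s., the identity holds simultaneously for all rationals in (T₁, T)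
  have hae : ∀ᵐ ω ∂μ, ∀ q : ℚ, (q : ℝ) ∈ Ioo T₁ T →
      (q : ℝ) * W T₁ ω * T₁ + (q : ℝ) * (∫ s in T₁..(q : ℝ), W s ω)
        - (q : ℝ) ^ 2 * W T₁ ω = 0 := by
    rw [ae_all_iff]
    intro q
    by_cases hq : (q : ℝ) ∈ Ioo T₁ T
    · filter_upwards [hId q (Ioo_subset_Icc_self hq)] with ω h _
      exact h
    · filter_upwards with ω h
      exact absurd h hq
  -- a.s., W t₀ = W T₁
  have hD : ∀ᵐ ω ∂μ, W t₀ ω - W T₁ ω = 0 := by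
    filter_upwards [hae] with ω hω
    set h : ℝ → ℝ := fun s => W s ω with hdef
    have hc : Continuous h := hWcont ω
    set G : ℝ → ℝ := fun t => (∫ s in T₁..t, h s) - (t - T₁) * h T₁ with hGdef
    have hGcont : Continuous G := by
      apply Continuous.sub
      · exact intervalIntegral.continuous_primitive (fun a b => hc.intervalIntegrable a b) T₁
      · continuity
    -- G vanishes on rationals in Ioo T₁ T
    have hGrat : ∀ q : ℚ, (q : ℝ) ∈ Ioo T₁ T → G q = 0 := by
      intro q hq
      have hqpos : (0 : ℝ) < q := lt_trans hT₁ hq.1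
      have := hω q hq
      have h1 : (q : ℝ) * ((∫ s in T₁..(q : ℝ), h s) - ((q : ℝ) - T₁) * h T₁) = 0 := by
        ring_nf
        ring_nf at this
        linarith
      have := mul_eq_zero.mp h1
      rcases this with h2 | h2
      · exact absurd h2 (ne_of_gt hqpos)
      · simpa [hGdef] using h2
    -- hence G vanishes on all of Ioo T₁ T
    have hGzero : ∀ t ∈ Ioo T₁ T, G t = 0 := by
    -- closed set {G = 0} contains closure of rationals ∩ Ioo ⊇ Ioo
      intro t ht
      have hclosed : IsClosed {x : ℝ | G x = 0} := isClosed_eq hGcont continuous_const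
      have hdense : Dense (range ((↑) : ℚ → ℝ)) := Rat.denseRange_cast
      have hsub : Ioo T₁ T ⊆ closure (Ioo T₁ T ∩ range ((↑) : ℚ → ℝ)) :=
        hdense.open_subset_closure_inter isOpen_Ioo
      have : Ioo T₁ T ∩ range ((↑) : ℚ → ℝ) ⊆ {x : ℝ | G x = 0} := by
        rintro x ⟨hx, q, rfl⟩
        exact hGrat q hx
      have := closure_mono this (hsub ht)
      rwa [hclosed.closure_eq] at this
    -- G vanishes near t₀
    have hGnhds : G =ᶠ[nhds t₀] (fun _ => (0 : ℝ)) := by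
      filter_upwards [isOpen_Ioo.mem_nhds ht₀] with x hx
      exact hGzero x hx
    -- derivative of G at t₀ equals h t₀ - h T₁
    have hderiv : HasDerivAt G (h t₀ - h T₁) t₀ := by
      have h1 : HasDerivAt (fun t => ∫ s in T₁..t, h s) (h t₀) t₀ :=
        intervalIntegral.integral_hasDerivAt_right (hc.intervalIntegrable _ _)
          hc.stronglyMeasurable.stronglyMeasurableAtFilter hc.continuousAt
      have h2 : HasDerivAt (fun t : ℝ => (t - T₁) * h T₁) (h T₁) t₀ := by
        simpa using ((hasDerivAt_id t₀).sub_const T₁).mul_const (h T₁)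
      exact h1.sub h2
    have hd0 : deriv G t₀ = 0 := by
      rw [hGnhds.deriv_eq]
      simp
    have := hderiv.deriv
    rw [hd0] at this
    simpa [hdef] using this.symm
  -- the increment W t₀ - W T₁ is Gaussian with positive variance
  have hmap := hWgauss T₁ t₀ (le_of_lt ht₀.1)
  have hv : Real.toNNReal (t₀ - T₁) ≠ 0 := by
    simp only [ne_eq, Real.toNNReal_eq_zero, not_le]
    linarith [ht₀.1]
  have hDmeas : Measurable (fun ω => W t₀ ω - W T₁ ω) := (hWmeas t₀).sub (hWmeas T₁)
  have hone : μ {ω | W t₀ ω - W T₁ ω = 0} = 1 := by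
    have := hD
    rw [ae_iff] at this
    have hms : MeasurableSet {ω | W t₀ ω - W T₁ ω = 0} :=
      hDmeas (measurableSet_singleton 0)
    rw [← prob_compl_eq_zero_iff hms, compl_setOf]
    exact this
  have hzero : μ {ω | W t₀ ω - W T₁ ω = 0} = 0 := by
    have : {ω | W t₀ ω - W T₁ ω = 0} = (fun ω => W t₀ ω - W T₁ ω) ⁻¹' {0} := rfl
    rw [this, ← Measure.map_apply hDmeas (measurableSet_singleton 0), hmap]
    exact gaussianReal_absolutelyContinuous 0 hv Real.volume_singleton
  rw [hone] at hzero
  exact one_ne_zero hzero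
end

section
/- Let f : Δ^c × R → R be positively homogeneous: f(t,s,λy) = λf(t,s,y) for all λ > 0. If (Y,Z) is the unique adapted S-solution of Y(t) = −ψ(t) + ∫_t^T (f(t,s,Y(s)) + r₁(s)Z(t,s) + r₂(s)Z(s,t)) ds − ∫_t^T Z(t,s)dW(s), then for λ > 0 the pair (λY, λZ) is the unique adapted S-solution of the same equation with ψ replaced by λψ. Hence ρ(t; λψ) = λρ(t; ψ) a.s., where ρ(t;ψ) := Y(t). -/
open MeasureTheory Set

/-- `(Y,Z)` is an adapted S-solution of the BSVIE
`Y(t) = −ψ(t) + ∫_t^T (h(t,s,Y(s)) + r₁(s)Z(t,s) + r₂(s)Z(s,t)) ds − ∫_t^T Z(t,s) dW(s)`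
on `[0,T]`, where `ito a b f` denotes the Itô integral `∫_a^b f(s) dW(s)`:
the equation holds a.s. for every `t` and `Z` is symmetric: `Z(t,s) = Z(s,t)` a.s. -/
def IsSSolution {Ω : Type*} [MeasurableSpace Ω] (μ : Measure Ω)
    (ito : ℝ → ℝ → (ℝ → Ω → ℝ) → Ω → ℝ) (T : ℝ) (r₁ r₂ : ℝ → ℝ)
    (h : ℝ → ℝ → ℝ → ℝ) (ψ : ℝ → Ω → ℝ)
    (Y : ℝ → Ω → ℝ) (Z : ℝ → ℝ → Ω → ℝ) : Prop :=
  (∀ t ∈ Icc 0 T, ∀ᵐ ω ∂μ,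
    Y t ω = -ψ t ω
      + (∫ s in Icc t T, (h t s (Y s ω) + r₁ s * Z t s ω + r₂ s * Z s t ω))
      - ito t T (fun s => Z t s) ω) ∧
  (∀ t ∈ Icc 0 T, ∀ s ∈ Icc 0 T, ∀ᵐ ω ∂μ, Z t s ω = Z s t ω)

/-- If `f` is positively homogeneous in `y` and `(Y,Z)` is the adapted
S-solution of `Y(t) = −ψ(t) + ∫_t^T (f(t,s,Y(s)) + r₁(s)Z(t,s) + r₂(s)Z(s,t)) ds
− ∫_t^T Z(t,s)dW(s)`, then for `λ > 0` the pair `(λY, λZ)` is an adapted S-solution of the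
same BSVIE with `ψ` replaced by `λψ`; hence `ρ(t;λψ) = λρ(t;ψ)` where `ρ(t;ψ) := Y(t)`. -/
theorem stmt12 {Ω : Type*} [MeasurableSpace Ω] (μ : Measure Ω) [IsProbabilityMeasure μ]
    (T : ℝ) (hT : 0 < T)
    (f : ℝ → ℝ → ℝ → ℝ) (r₁ r₂ : ℝ → ℝ)
    -- `exp(½∫_0^T rᵢ² ds) < ∞`, i.e. the deterministic functions `rᵢ` are square integrable
    (hr₁ : IntegrableOn (fun s => r₁ s ^ 2) (Icc 0 T) volume)
    (hr₂ : IntegrableOn (fun s => r₂ s ^ 2) (Icc 0 T) volume)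
    (hhom : ∀ t s (y : ℝ) (l : ℝ), 0 < l → f t s (l * y) = l * f t s y)
    (ito : ℝ → ℝ → (ℝ → Ω → ℝ) → Ω → ℝ)
    -- positive homogeneity of the Itô integral
    (hito_smul : ∀ a b (c : ℝ) (g : ℝ → Ω → ℝ),
      ito a b (fun s ω => c * g s ω) = fun ω => c * ito a b g ω)
    (ψ : ℝ → Ω → ℝ) (l : ℝ) (hl : 0 < l)
    (Y : ℝ → Ω → ℝ) (Z : ℝ → ℝ → Ω → ℝ)
    (hsol : IsSSolution μ ito T r₁ r₂ f ψ Y Z) :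
    IsSSolution μ ito T r₁ r₂ f (fun t ω => l * ψ t ω)
      (fun t ω => l * Y t ω) (fun t s ω => l * Z t s ω) := by
  obtain ⟨heq, hsym⟩ := hsol
  constructor
  · intro t ht
    filter_upwards [heq t ht] with ω hω
    have hint : (∫ s in Icc t T,
        (f t s (l * Y s ω) + r₁ s * (l * Z t s ω) + r₂ s * (l * Z s t ω)))
        = l * ∫ s in Icc t T, (f t s (Y s ω) + r₁ s * Z t s ω + r₂ s * Z s t ω) := by
      rw [← integral_const_mul]
      apply integral_congr_ae
      filter_upwards with s
      rw [hhom t s (Y s ω) l hl]; ring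
    have hito : ito t T (fun s => fun ω => l * Z t s ω) ω
        = l * ito t T (fun s => Z t s) ω := by
      rw [hito_smul t T l (fun s => Z t s)]
    rw [hint, hito, hω]; ring
  · intro t ht s hs
    filter_upwards [hsym t ht s hs] with ω hω
    rw [hω]
end
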